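/- Let G be a d-regular finite simple graph of order n with d ≥ 1, let k be a positive integer and let f be a k-rainbow dominating function on G with weight w(f). With e₂ the number of edges with both endpoints colored, the inequality w(f) ≥ (kn + 2e₂)/(k + d) holds (equivalently, (k + d)·w(f) ≥ k·n + 2e₂). -/

import Mathlib

open SimpleGraph Finset

/-- `f` is a `k`-rainbow dominating function on `G`: every vertex with empty color set
has, for each color, a neighbour carrying that color. -/
def IsKRDF {V : Type*} (G : SimpleGraph V) (k : ℕ) (f : V → Finset (Fin k)) : Prop :=
  ∀ v : V, f v = ∅ → ∀ i : Fin k, ∃ u : V, G.Adj v u ∧ i ∈ f u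

/-- The weight of a rainbow coloring function. -/
def rdfWeight {V : Type*} [Fintype V] {k : ℕ} (f : V → Finset (Fin k)) : ℕ :=
  ∑ v : V, (f v).card

/-- The `k`-rainbow domination number of `G`: the minimum weight of a `k`-RDF. -/
noncomputable def rainbowDomNum {V : Type*} [Fintype V] (G : SimpleGraph V) (k : ℕ) : ℕ :=
  sInf {w : ℕ | ∃ f : V → Finset (Fin k), IsKRDF G k f ∧ rdfWeight f = w}

/-- Number of colored vertices (`c`). -/
noncomputable def coloredCount {V : Type*} {k : ℕ} (f : V → Finset (Fin k)) : ℕ :=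
  {v : V | f v ≠ ∅}.ncard

/-- Number of non-colored vertices (`c₀`). -/
noncomputable def uncoloredCount {V : Type*} {k : ℕ} (f : V → Finset (Fin k)) : ℕ :=
  {v : V | f v = ∅}.ncard

/-- Number of edges with both endpoints non-colored (`e₀`). -/
noncomputable def e0Count {V : Type*} (G : SimpleGraph V) {k : ℕ}
    (f : V → Finset (Fin k)) : ℕ :=
  {e ∈ G.edgeSet | ∀ v ∈ e, f v = ∅}.ncard

/-- Number of edges with exactly one colored endpoint (`e₁`). -/
noncomputable def e1Count {V : Type*} (G : SimpleGraph V) {k : ℕ}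
    (f : V → Finset (Fin k)) : ℕ :=
  {e ∈ G.edgeSet | (∃ v ∈ e, f v = ∅) ∧ ∃ v ∈ e, f v ≠ ∅}.ncard

/-- Number of edges with both endpoints colored (`e₂`). -/
noncomputable def e2Count {V : Type*} (G : SimpleGraph V) {k : ℕ}
    (f : V → Finset (Fin k)) : ℕ :=
  {e ∈ G.edgeSet | ∀ v ∈ e, f v ≠ ∅}.ncard

/-- For a `d`-regular graph (`d ≥ 1`) of order `n` and a `k`-RDF `f`,
`w(f) ≥ (kn + 2e₂)/(k + d)`, i.e. `(k + d)·w(f) ≥ k·n + 2e₂`. -/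
def coloredSub {V : Type*} (G : SimpleGraph V) {k : ℕ} (f : V → Finset (Fin k)) :
    SimpleGraph V where
  Adj u v := G.Adj u v ∧ f u ≠ ∅ ∧ f v ≠ ∅
  symm := ⟨fun u v h => ⟨h.1.symm, h.2.2, h.2.1⟩⟩
  loopless := ⟨fun v h => G.loopless.irrefl v h.1⟩

lemma e2_eq {V : Type*} [Fintype V] (G : SimpleGraph V) {k : ℕ} (f : V → Finset (Fin k)) :
    {e ∈ G.edgeSet | ∀ v ∈ e, f v ≠ ∅} = (coloredSub G f).edgeSet := by
  ext e
  induction e using Sym2.ind with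
  | _ a b =>
    simp only [Set.mem_setOf_eq, mem_edgeSet, Sym2.mem_iff, coloredSub]
    constructor
    · rintro ⟨h, hall⟩
      exact ⟨h, hall a (Or.inl rfl), hall b (Or.inr rfl)⟩
    · rintro ⟨h, ha, hb⟩
      refine ⟨h, fun v hv => ?_⟩
      rcases hv with rfl | rfl <;> assumption

theorem stmt_5 {V : Type*} [Fintype V] (G : SimpleGraph V) [DecidableRel G.Adj]
    (d k : ℕ) (hd : 1 ≤ d) (hreg : G.IsRegularOfDegree d) (hk : 0 < k)
    (f : V → Finset (Fin k)) (hf : IsKRDF G k f) :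
    k * Fintype.card V + 2 * e2Count G f ≤ (k + d) * rdfWeight f := by
  classical
  set G' := coloredSub G f with hG'
  set A : Finset V := univ.filter (fun v => f v = ∅) with hA
  set B : Finset V := univ.filter (fun v => f v ≠ ∅) with hB
  set nA : V → ℕ := fun u => ((G.neighborFinset u).filter (fun v => f v = ∅)).card with hnA
  set nB : V → ℕ := fun u => ((G.neighborFinset u).filter (fun v => f v ≠ ∅)).card with hnB
  set w := rdfWeight f with hw
  -- nA + nB = d
  have hnAB : ∀ u, nA u + nB u = d := by
    intro u
    have := Finset.card_filter_add_card_filter_not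
      (s := G.neighborFinset u) (p := fun v => f v = ∅)
    simpa [hnA, hnB, hreg u, G.card_neighborFinset_eq_degree] using this
  -- each uncolored vertex sees weight ≥ k among neighbors
  have claim1 : ∀ v ∈ A, k ≤ ∑ u ∈ G.neighborFinset v, (f u).card := by
    intro v hv
    rw [hA, mem_filter] at hv
    have hsub : (Finset.univ : Finset (Fin k)) ⊆ (G.neighborFinset v).biUnion f := by
      intro i _
      obtain ⟨u, hadj, hi⟩ := hf v hv.2 i
      exact Finset.mem_biUnion.2 ⟨u, (G.mem_neighborFinset v u).2 hadj, hi⟩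
    calc k = (Finset.univ : Finset (Fin k)).card := by simp
    _ ≤ ((G.neighborFinset v).biUnion f).card := Finset.card_le_card hsub
    _ ≤ ∑ u ∈ G.neighborFinset v, (f u).card := Finset.card_biUnion_le
  -- swap: sum over A of neighbor weights = ∑_u |f u| * nA u
  have swap : ∑ v ∈ A, ∑ u ∈ G.neighborFinset v, (f u).card
      = ∑ u : V, (f u).card * nA u := by
    have h1 : ∀ v : V, ∑ u ∈ G.neighborFinset v, (f u).card
        = ∑ u : V, if G.Adj v u then (f u).card else 0 := by
      intro v
      rw [SimpleGraph.neighborFinset_eq_filter, Finset.sum_filter]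
    calc ∑ v ∈ A, ∑ u ∈ G.neighborFinset v, (f u).card
        = ∑ v ∈ A, ∑ u : V, if G.Adj v u then (f u).card else 0 :=
          Finset.sum_congr rfl fun v _ => h1 v
      _ = ∑ v : V, if f v = ∅ then (∑ u : V, if G.Adj v u then (f u).card else 0) else 0 := by
          rw [hA, Finset.sum_filter]
      _ = ∑ v : V, ∑ u : V, if f v = ∅ ∧ G.Adj v u then (f u).card else 0 := by
          refine Finset.sum_congr rfl fun v _ => ?_
          by_cases hv : f v = ∅ <;> simp [hv]
      _ = ∑ u : V, ∑ v : V, if f v = ∅ ∧ G.Adj v u then (f u).card else 0 := Finset.sum_comm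
      _ = ∑ u : V, (f u).card * nA u := by
          refine Finset.sum_congr rfl fun u _ => ?_
          rw [Finset.sum_ite, Finset.sum_const, Finset.sum_const_zero, add_zero, smul_eq_mul,
            Nat.mul_comm]
          congr 1
          have : (univ.filter (fun v => f v = ∅ ∧ G.Adj v u))
              = (G.neighborFinset u).filter (fun v => f v = ∅) := by
            ext v
            simp only [Finset.mem_filter, Finset.mem_univ, true_and,
              SimpleGraph.mem_neighborFinset]
            exact ⟨fun h => ⟨h.2.symm, h.1⟩, fun h => ⟨h.2, h.1.symm⟩⟩
          rw [this]
  have step1 : k * A.card ≤ ∑ u : V, (f u).card * nA u := by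
    rw [← swap]
    calc k * A.card = ∑ v ∈ A, k := by rw [Finset.sum_const, Nat.mul_comm, smul_eq_mul]
    _ ≤ _ := Finset.sum_le_sum claim1
  -- e₂ relation
  have he2 : 2 * e2Count G f = ∑ u : V, G'.degree u := by
    rw [e2Count, e2_eq, ← SimpleGraph.coe_edgeFinset, Set.ncard_coe_finset]
    exact ((coloredSub G f).sum_degrees_eq_twice_card_edges).symm
  have hdeg : ∀ u ∈ B, G'.degree u = nB u := by
    intro u hu
    rw [hB, mem_filter] at hu
    have hN : G'.neighborFinset u = (G.neighborFinset u).filter (fun v => f v ≠ ∅) := by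
      ext v
      simp only [SimpleGraph.mem_neighborFinset, Finset.mem_filter, hG', coloredSub]
      exact ⟨fun h => ⟨h.1, h.2.2⟩, fun h => ⟨h.1, hu.2, h.2⟩⟩
    rw [← G'.card_neighborFinset_eq_degree, hN]
  have hdeg0 : ∀ u ∉ B, G'.degree u = 0 := by
    intro u hu
    rw [hB, mem_filter] at hu
    push_neg at hu
    have hu' : f u = ∅ := hu (Finset.mem_univ u)
    rw [← G'.card_neighborFinset_eq_degree, Finset.card_eq_zero]
    ext v
    simp only [SimpleGraph.mem_neighborFinset, Finset.notMem_empty, iff_false, hG', coloredSub]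
    rintro ⟨-, h, -⟩
    exact h hu'
  have step2 : 2 * e2Count G f ≤ ∑ u : V, (f u).card * nB u := by
    rw [he2]
    calc ∑ u : V, G'.degree u = ∑ u ∈ B, G'.degree u := by
          rw [← Finset.sum_subset (Finset.subset_univ B)]
          intro x _ hx; exact hdeg0 x hx
    _ = ∑ u ∈ B, nB u := Finset.sum_congr rfl hdeg
    _ ≤ ∑ u ∈ B, (f u).card * nB u := by
          refine Finset.sum_le_sum fun u hu => ?_
          rw [hB, mem_filter] at hu
          have : 1 ≤ (f u).card := Finset.card_pos.2 (Finset.nonempty_iff_ne_empty.2 hu.2)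
          exact Nat.le_mul_of_pos_left _ this
    _ ≤ ∑ u : V, (f u).card * nB u :=
          Finset.sum_le_sum_of_subset (Finset.subset_univ B)
  have hBw : B.card ≤ w := by
    calc B.card = ∑ u ∈ B, 1 := by simp
    _ ≤ ∑ u ∈ B, (f u).card := by
          refine Finset.sum_le_sum fun u hu => ?_
          rw [hB, mem_filter] at hu
          exact Finset.card_pos.2 (Finset.nonempty_iff_ne_empty.2 hu.2)
    _ ≤ ∑ u : V, (f u).card := Finset.sum_le_sum_of_subset (Finset.subset_univ B)
    _ = w := rfl
  have hcard : A.card + B.card = Fintype.card V := by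
    rw [hA, hB]
    simpa using Finset.card_filter_add_card_filter_not
      (s := (univ : Finset V)) (p := fun v => f v = ∅)
  have hdw : ∑ u : V, (f u).card * nA u + ∑ u : V, (f u).card * nB u = d * w := by
    rw [← Finset.sum_add_distrib]
    calc ∑ u : V, ((f u).card * nA u + (f u).card * nB u)
        = ∑ u : V, (f u).card * d := by
          refine Finset.sum_congr rfl fun u _ => ?_
          rw [← Nat.mul_add, hnAB u]
    _ = d * w := by rw [← Finset.sum_mul, hw, rdfWeight, Nat.mul_comm]
  calc k * Fintype.card V + 2 * e2Count G f
      = k * A.card + k * B.card + 2 * e2Count G f := by rw [← Nat.mul_add, hcard]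
    _ ≤ ∑ u : V, (f u).card * nA u + k * w + ∑ u : V, (f u).card * nB u := by
        have := Nat.mul_le_mul_left k hBw
        omega
    _ = d * w + k * w := by omega
    _ = (k + d) * w := by ring
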